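/- Let 0 < a < b and c = k(b-a) + da for k ∈ {1,…,d}. Then the box-norm with parameters (a,b,c) satisfies ‖w‖²_box = min_{z∈R^d} ( (1/a)‖w-z‖₂² + (1/(b-a))‖z‖²_(k) ) for every w ∈ R^d. -/

import Mathlib

noncomputable def thetaNorm {d : ℕ} (Θ : Set (Fin d → ℝ)) (w : Fin d → ℝ) : ℝ :=
  Real.sqrt (⨅ θ : Θ, ∑ i, w i ^ 2 / (θ : Fin d → ℝ) i)

private lemma key_ineq {a s w z : ℝ} (ha : 0 < a) (hs : 0 < s) :
    w ^ 2 / (a + s) ≤ (w - z) ^ 2 / a + z ^ 2 / s := by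
  rw [div_add_div _ _ ha.ne' hs.ne', div_le_div_iff₀ (by positivity) (by positivity)]
  nlinarith [sq_nonneg (s * w - (a + s) * z)]

set_option maxHeartbeats 2000000 in
theorem box_norm_moreau_of_ksup {d k : ℕ} (hk1 : 1 ≤ k) (hkd : k ≤ d)
    (a b : ℝ) (ha : 0 < a) (hab : a < b) (w : Fin d → ℝ) :
    IsLeast {x : ℝ | ∃ z : Fin d → ℝ,
        x = (1 / a) * ∑ i, (w i - z i) ^ 2 +
          (1 / (b - a)) *
            (thetaNorm {θ : Fin d → ℝ | (∀ i, 0 < θ i ∧ θ i ≤ 1) ∧ ∑ i, θ i ≤ (k : ℝ)} z) ^ 2}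
      ((thetaNorm {θ : Fin d → ℝ | (∀ i, a ≤ θ i ∧ θ i ≤ b) ∧
          ∑ i, θ i ≤ (k : ℝ) * (b - a) + d * a} w) ^ 2) := by
  classical
  have hba : (0:ℝ) < b - a := sub_pos.mpr hab
  have hd1 : 1 ≤ d := hk1.trans hkd
  have hdpos : (0:ℝ) < (d:ℝ) := by exact_mod_cast hd1
  have hk1R : (1:ℝ) ≤ (k:ℝ) := by exact_mod_cast hk1
  have hkdR : (k:ℝ) ≤ (d:ℝ) := by exact_mod_cast hkd
  set c : ℝ := (k : ℝ) * (b - a) + d * a with hc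
  set Θk : Set (Fin d → ℝ) :=
    {θ : Fin d → ℝ | (∀ i, 0 < θ i ∧ θ i ≤ 1) ∧ ∑ i, θ i ≤ (k : ℝ)} with hΘk
  set Box : Set (Fin d → ℝ) :=
    {θ : Fin d → ℝ | (∀ i, a ≤ θ i ∧ θ i ≤ b) ∧ ∑ i, θ i ≤ c} with hBoxdef
  -- nonemptiness
  haveI hΘkne : Nonempty Θk := by
    refine ⟨⟨fun _ => (k:ℝ)/d, ⟨fun i => ⟨by positivity, by
      rw [div_le_one hdpos]; exact hkdR⟩, ?_⟩⟩⟩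
    simp only [Finset.sum_const, Finset.card_univ, Fintype.card_fin, nsmul_eq_mul]
    rw [mul_div_cancel₀ _ hdpos.ne']
  have hBoxa : (fun _ : Fin d => a) ∈ Box := by
    refine ⟨fun i => ⟨le_refl a, hab.le⟩, ?_⟩
    simp only [Finset.sum_const, Finset.card_univ, Fintype.card_fin, nsmul_eq_mul, hc]
    nlinarith [hba, hk1R]
  haveI hBoxne : Nonempty Box := ⟨⟨_, hBoxa⟩⟩
  -- bounded below
  have hbddK : ∀ v : Fin d → ℝ,
      BddBelow (Set.range fun θ : Θk => ∑ i, v i ^ 2 / (θ : Fin d → ℝ) i) := by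
    intro v
    refine ⟨0, ?_⟩
    rintro x ⟨θ, rfl⟩
    exact Finset.sum_nonneg fun i _ => div_nonneg (sq_nonneg _) (θ.2.1 i).1.le
  have hbddB : BddBelow (Set.range fun θ : Box => ∑ i, w i ^ 2 / (θ : Fin d → ℝ) i) := by
    refine ⟨0, ?_⟩
    rintro x ⟨θ, rfl⟩
    exact Finset.sum_nonneg fun i _ => div_nonneg (sq_nonneg _) (ha.trans_le (θ.2.1 i).1).le
  -- squared norms as infima
  have hKnn : ∀ v : Fin d → ℝ, 0 ≤ ⨅ θ : Θk, ∑ i, v i ^ 2 / (θ : Fin d → ℝ) i := by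
    intro v
    exact Real.iInf_nonneg fun θ =>
      Finset.sum_nonneg fun i _ => div_nonneg (sq_nonneg _) (θ.2.1 i).1.le
  have hBnn : 0 ≤ ⨅ θ : Box, ∑ i, w i ^ 2 / (θ : Fin d → ℝ) i :=
    Real.iInf_nonneg fun θ =>
      Finset.sum_nonneg fun i _ => div_nonneg (sq_nonneg _) (ha.trans_le (θ.2.1 i).1).le
  have hKsq : ∀ v : Fin d → ℝ,
      (thetaNorm Θk v) ^ 2 = ⨅ θ : Θk, ∑ i, v i ^ 2 / (θ : Fin d → ℝ) i := by
    intro v; unfold thetaNorm; exact Real.sq_sqrt (hKnn v)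
  have hBsq : (thetaNorm Box w) ^ 2 = ⨅ θ : Box, ∑ i, w i ^ 2 / (θ : Fin d → ℝ) i := by
    unfold thetaNorm; exact Real.sq_sqrt hBnn
  -- the lower bound: for every z the objective dominates the box infimum
  have lower : ∀ z : Fin d → ℝ,
      (⨅ θ : Box, ∑ i, w i ^ 2 / (θ : Fin d → ℝ) i) ≤
        (1 / a) * ∑ i, (w i - z i) ^ 2 +
          (1 / (b - a)) * ⨅ θ : Θk, ∑ i, z i ^ 2 / (θ : Fin d → ℝ) i := by
    intro z
    set A : ℝ := (1 / a) * ∑ i, (w i - z i) ^ 2 with hA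
    set B : ℝ := ⨅ θ : Box, ∑ i, w i ^ 2 / (θ : Fin d → ℝ) i with hB
    set K : ℝ := ⨅ θ : Θk, ∑ i, z i ^ 2 / (θ : Fin d → ℝ) i with hK
    have key : (B - A) * (b - a) ≤ K := by
      refine le_ciInf fun φ => ?_
      obtain ⟨φ, hφ⟩ := φ
      have hφpos : ∀ i, 0 < φ i := fun i => (hφ.1 i).1
      -- move φ into the box
      have hθBox : (fun i => a + (b - a) * φ i) ∈ Box := by
        refine ⟨fun i => ⟨?_, ?_⟩, ?_⟩
        · show a ≤ a + (b - a) * φ i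
          nlinarith [(hφpos i), hba]
        · show a + (b - a) * φ i ≤ b
          nlinarith [(hφ.1 i).2, hba]
        · have : ∑ i, (a + (b - a) * φ i) = d * a + (b - a) * ∑ i, φ i := by
            rw [Finset.sum_add_distrib, Finset.sum_const, Finset.card_univ,
              Fintype.card_fin, ← Finset.mul_sum, nsmul_eq_mul]
          rw [this, hc]
          nlinarith [hφ.2, hba]
      have h1 : B ≤ ∑ i, w i ^ 2 / (a + (b - a) * φ i) := by
        rw [hB]
        exact ciInf_le hbddB ⟨_, hθBox⟩
      have h2 : ∑ i, w i ^ 2 / (a + (b - a) * φ i) ≤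
          ∑ i, ((w i - z i) ^ 2 / a + z i ^ 2 / ((b - a) * φ i)) :=
        Finset.sum_le_sum fun i _ => key_ineq ha (mul_pos hba (hφpos i))
      have h3 : ∑ i, ((w i - z i) ^ 2 / a + z i ^ 2 / ((b - a) * φ i)) =
          A + (1 / (b - a)) * ∑ i, z i ^ 2 / φ i := by
        rw [hA, Finset.mul_sum, Finset.mul_sum, ← Finset.sum_add_distrib]
        refine Finset.sum_congr rfl fun i _ => ?_
        have hp1 : φ i ≠ 0 := (hφpos i).ne'
        have hp2 : (b - a) ≠ 0 := hba.ne'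
        have hp3 : a ≠ 0 := ha.ne'
        field_simp
      have hBA : B - A ≤ (1 / (b - a)) * ∑ i, z i ^ 2 / φ i := by
        have := h1.trans (h2.trans_eq h3); linarith
      calc (B - A) * (b - a) ≤ ((1 / (b - a)) * ∑ i, z i ^ 2 / φ i) * (b - a) :=
            mul_le_mul_of_nonneg_right hBA hba.le
        _ = ∑ i, z i ^ 2 / φ i := by field_simp
    have hBA' : B - A ≤ K / (b - a) := (le_div_iff₀ hba).mpr key
    have : K / (b - a) = (1 / (b - a)) * K := by ring
    linarith [hBA', this.le]
  -- attainment of the box infimum by compactness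
  obtain ⟨θs, hθsBox, hθsmin⟩ :
      ∃ θs ∈ Box, ∀ θ ∈ Box, (∑ i, w i ^ 2 / θs i) ≤ ∑ i, w i ^ 2 / θ i := by
    have hcomp : IsCompact Box := by
      have h1 : IsCompact (Set.pi Set.univ fun _ : Fin d => Set.Icc a b) :=
        isCompact_univ_pi fun _ => isCompact_Icc
      have h2 : IsClosed {θ : Fin d → ℝ | ∑ i, θ i ≤ c} :=
        isClosed_le (continuous_finset_sum _ fun i _ => continuous_apply i) continuous_const
      have hEq : Box = (Set.pi Set.univ fun _ : Fin d => Set.Icc a b) ∩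
          {θ : Fin d → ℝ | ∑ i, θ i ≤ c} := by
        ext θ
        simp [hBoxdef, Set.mem_pi, Set.mem_Icc, forall_and, and_assoc, Pi.le_def]
      rw [hEq]
      exact h1.inter_right h2
    have hcont : ContinuousOn (fun θ : Fin d → ℝ => ∑ i, w i ^ 2 / θ i) Box := by
      refine continuousOn_finset_sum _ fun i _ => ?_
      exact ContinuousOn.div continuousOn_const (continuous_apply i).continuousOn
        fun θ hθ => (ha.trans_le (hθ.1 i).1).ne'
    obtain ⟨θs, hθs, hmin⟩ := hcomp.exists_isMinOn ⟨_, hBoxa⟩ hcont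
    exact ⟨θs, hθs, fun θ hθ => hmin hθ⟩
  have hθspos : ∀ i, 0 < θs i := fun i => ha.trans_le (hθsBox.1 i).1
  have hBeq : (⨅ θ : Box, ∑ i, w i ^ 2 / (θ : Fin d → ℝ) i) = ∑ i, w i ^ 2 / θs i :=
    le_antisymm (ciInf_le hbddB ⟨θs, hθsBox⟩) (le_ciInf fun θ => hθsmin θ θ.2)
  -- the optimal z
  set z : Fin d → ℝ := fun i => w i * (θs i - a) / θs i with hz
  set φ : Fin d → ℝ := fun i => (θs i - a) / (b - a) with hφdef
  have hφnn : ∀ i, 0 ≤ φ i := fun i => div_nonneg (by linarith [(hθsBox.1 i).1]) hba.le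
  have hφle1 : ∀ i, φ i ≤ 1 := fun i => by
    rw [hφdef, div_le_one hba]; linarith [(hθsBox.1 i).2]
  have hφsum : ∑ i, φ i ≤ (k : ℝ) := by
    have : ∑ i, φ i = (∑ i, θs i - d * a) / (b - a) := by
      rw [hφdef, ← Finset.sum_div]
      congr 1
      rw [Finset.sum_sub_distrib, Finset.sum_const, Finset.card_univ, Fintype.card_fin,
        nsmul_eq_mul]
    rw [this, div_le_iff₀ hba]
    have := hθsBox.2
    rw [hc] at this
    linarith
  set S : ℝ := ∑ i, if θs i = a then 0 else z i ^ 2 / φ i with hS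
  have hSnn : 0 ≤ S := by
    refine Finset.sum_nonneg fun i _ => ?_
    split
    · exact le_refl 0
    · exact div_nonneg (sq_nonneg _) (hφnn i)
  -- claim 1 : exact decomposition at θs
  have claim1 : (1 / a) * ∑ i, (w i - z i) ^ 2 + (1 / (b - a)) * S = ∑ i, w i ^ 2 / θs i := by
    rw [hS, Finset.mul_sum, Finset.mul_sum, ← Finset.sum_add_distrib]
    refine Finset.sum_congr rfl fun i _ => ?_
    by_cases hia : θs i = a
    · have hzi : z i = 0 := by simp [hz, hia]
      rw [if_pos hia, hzi, hia]
      ring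
    · simp only [if_neg hia, hz, hφdef]
      have h0 : θs i ≠ 0 := (hθspos i).ne'
      have h1 : θs i - a ≠ 0 := sub_ne_zero.mpr hia
      field_simp
      ring
  -- claim 2 : K z ≤ S
  have claim2 : (⨅ θ : Θk, ∑ i, z i ^ 2 / (θ : Fin d → ℝ) i) ≤ S := by
    have step : ∀ ε : ℝ, 0 < ε → ε < 1 →
        (⨅ θ : Θk, ∑ i, z i ^ 2 / (θ : Fin d → ℝ) i) ≤ (1 / (1 - ε)) * S := by
      intro ε hε0 hε1
      have h1ε : 0 < 1 - ε := by linarith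
      set φε : Fin d → ℝ := fun i => (1 - ε) * φ i + ε * ((k : ℝ) / d) with hφε
      have hφεΘk : φε ∈ Θk := by
        refine ⟨fun i => ⟨?_, ?_⟩, ?_⟩
        · show 0 < (1 - ε) * φ i + ε * ((k : ℝ) / d)
          have : 0 < ε * ((k:ℝ)/d) := by positivity
          nlinarith [hφnn i, h1ε]
        · show (1 - ε) * φ i + ε * ((k : ℝ) / d) ≤ 1
          have h2 : (k:ℝ)/d ≤ 1 := by rw [div_le_one hdpos]; exact hkdR
          nlinarith [hφle1 i, h1ε, hε0]
        · have : ∑ i, φε i = (1 - ε) * ∑ i, φ i + ε * (k : ℝ) := by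
            rw [hφε]
            rw [Finset.sum_add_distrib, ← Finset.mul_sum, Finset.sum_const,
              Finset.card_univ, Fintype.card_fin, nsmul_eq_mul]
            congr 1
            field_simp
          rw [this]
          nlinarith [hφsum, h1ε, hε0]
      have h1 : (⨅ θ : Θk, ∑ i, z i ^ 2 / (θ : Fin d → ℝ) i) ≤ ∑ i, z i ^ 2 / φε i :=
        ciInf_le (hbddK z) ⟨φε, hφεΘk⟩
      have h2 : ∑ i, z i ^ 2 / φε i ≤ (1 / (1 - ε)) * S := by
        rw [hS, Finset.mul_sum]
        refine Finset.sum_le_sum fun i _ => ?_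
        by_cases hia : θs i = a
        · have hzi : z i = 0 := by rw [hz]; simp [hia]
          simp [hzi, hia]
        · rw [if_neg hia]
          have hφipos : 0 < φ i := by
            rw [hφdef]
            have : a < θs i := lt_of_le_of_ne (hθsBox.1 i).1 (Ne.symm hia)
            exact div_pos (by linarith) hba
          have hden : (1 - ε) * φ i ≤ φε i := by
            rw [hφε]
            have : 0 ≤ ε * ((k:ℝ)/d) := by positivity
            linarith
          have h3 : z i ^ 2 / φε i ≤ z i ^ 2 / ((1 - ε) * φ i) :=
            div_le_div_of_nonneg_left (sq_nonneg _) (by positivity) hden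
          have h4 : z i ^ 2 / ((1 - ε) * φ i) = 1 / (1 - ε) * (z i ^ 2 / φ i) := by
            rw [div_mul_eq_div_div_swap, one_div_mul_eq_div]
          linarith [h3, h4.le]
      exact h1.trans h2
    refine le_of_forall_pos_le_add fun δ hδ => ?_
    rcases eq_or_lt_of_le hSnn with hS0 | hSpos
    · have := step (1/2) (by norm_num) (by norm_num)
      rw [← hS0] at this ⊢
      simpa using this.trans (by norm_num [hδ.le])
    · set ε : ℝ := δ / (S + δ) with hε
      have hSδ : 0 < S + δ := by linarith
      have hε0 : 0 < ε := div_pos hδ hSδ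
      have hε1 : ε < 1 := by rw [hε, div_lt_one hSδ]; linarith
      have := step ε hε0 hε1
      have heq : (1 / (1 - ε)) * S = S + δ := by
        rw [hε]
        have h1 : 1 - δ / (S + δ) = S / (S + δ) := by field_simp; ring
        rw [h1]
        field_simp
      linarith [this, heq.le]
  -- assemble
  constructor
  · refine ⟨z, ?_⟩
    rw [hBsq, hKsq z, hBeq]
    refine le_antisymm ?_ ?_
    · have := lower z
      rw [hBeq] at this
      exact this
    · calc (1 / a) * ∑ i, (w i - z i) ^ 2 +
            (1 / (b - a)) * ⨅ θ : Θk, ∑ i, z i ^ 2 / (θ : Fin d → ℝ) i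
          ≤ (1 / a) * ∑ i, (w i - z i) ^ 2 + (1 / (b - a)) * S := by
            have := mul_le_mul_of_nonneg_left claim2 (by positivity : (0:ℝ) ≤ 1 / (b - a))
            linarith
        _ = ∑ i, w i ^ 2 / θs i := claim1
  · rintro x ⟨z', rfl⟩
    rw [hBsq, hKsq z']
    exact lower z'
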